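/- Let $-\infty \le u_1 < u_2 \le \infty$ and $-\infty \le v_1 < v_2 \le \infty$. Let $f,g:[u_1,u_2]\times[v_1,v_2]\to\mathbb{R}$ be continuous nonnegative functions, and $h:[u_1,u_2]\to\mathbb{R}$, $k:[v_1,v_2]\to\mathbb{R}$ continuous nonnegative functions. Suppose that for all $(u,v)$, $f(u,v)+g(u,v) \le A + B\left[\int_{u_1}^u h(u')f(u',v)\,du' + \int_{v_1}^v k(v')g(u,v')\,dv'\right]$, where $A,B>0$. Then for every $\eta>0$ and every $\beta \ge 2(1+\eta)/\eta$, one has $f(u,v)+g(u,v) \le (1+\eta)A\, e^{\beta B\left[\int_{u_1}^u h(u')\,du' + \int_{v_1}^v k(v')\,dv'\right]}$ for all $(u,v)\in[u_1,u_2]\times[v_1,v_2]$. -/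

import Mathlib

open MeasureTheory Set intervalIntegral

namespace GronwallAux

lemma hasDerivAt_primitive {w : ℝ → ℝ} (hw : Continuous w) (a x : ℝ) :
    HasDerivAt (fun y => ∫ t in a..y, w t) (w x) x :=
  integral_hasDerivAt_right (hw.intervalIntegrable a x)
    (hw.stronglyMeasurableAtFilter _ _) hw.continuousAt

lemma continuous_primitive' {w : ℝ → ℝ} (hw : Continuous w) (a : ℝ) :
    Continuous (fun y => ∫ t in a..y, w t) :=
  intervalIntegral.continuous_primitive (fun _ _ => hw.intervalIntegrable _ _) a

lemma integral_mul_exp {w : ℝ → ℝ} (hw : Continuous w) (a b c D : ℝ) (hD : 0 < D) :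
    ∫ s in a..b, w s * Real.exp (D * ((∫ t in a..s, w t) + c)) =
      (Real.exp (D * ((∫ t in a..b, w t) + c)) - Real.exp (D * c)) / D := by
  set W : ℝ → ℝ := fun y => ∫ t in a..y, w t with hW
  have hWc : Continuous W := continuous_primitive' hw a
  have key : ∀ x ∈ uIcc a b,
      HasDerivAt (fun y => Real.exp (D * (W y + c)) / D) (w x * Real.exp (D * (W x + c))) x := by
    intro x _
    have h1 : HasDerivAt (fun y => Real.exp (D * (W y + c)) / D)
        (Real.exp (D * (W x + c)) * (D * w x) / D) x := by
      exact ((((hasDerivAt_primitive hw a x).add_const c).const_mul D).exp).div_const D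
    convert h1 using 1
    field_simp
  have hint : IntervalIntegrable (fun s => w s * Real.exp (D * ((W s) + c))) volume a b :=
    (hw.mul ((continuous_const.mul (hWc.add continuous_const)).rexp)).intervalIntegrable a b
  have := intervalIntegral.integral_eq_sub_of_hasDerivAt key hint
  rw [this]
  have hWa : W a = 0 := intervalIntegral.integral_same
  rw [hWa]
  simp only [hW]
  ring

lemma integral_mul_pow {w : ℝ → ℝ} (hw : Continuous w) (a b c : ℝ) (n : ℕ) :
    ∫ s in a..b, w s * ((∫ t in a..s, w t) + c) ^ n =
      (((∫ t in a..b, w t) + c) ^ (n + 1) - c ^ (n + 1)) / (n + 1) := by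
  set W : ℝ → ℝ := fun y => ∫ t in a..y, w t with hW
  have hWc : Continuous W := continuous_primitive' hw a
  have key : ∀ x ∈ uIcc a b,
      HasDerivAt (fun y => (W y + c) ^ (n + 1) / (n + 1)) (w x * (W x + c) ^ n) x := by
    intro x _
    have h1 : HasDerivAt (fun y => (W y + c) ^ (n + 1) / (n + 1))
        ((n + 1 : ℕ) * (W x + c) ^ n * w x / (n + 1)) x :=
      (((hasDerivAt_primitive hw a x).add_const c).pow (n + 1)).div_const (n + 1)
    convert h1 using 1
    push_cast
    field_simp
  have hint : IntervalIntegrable (fun s => w s * ((W s) + c) ^ n) volume a b :=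
    (hw.mul ((hWc.add continuous_const).pow n)).intervalIntegrable a b
  have := intervalIntegral.integral_eq_sub_of_hasDerivAt key hint
  rw [this]
  have hWa : W a = 0 := intervalIntegral.integral_same
  rw [hWa]
  simp only [hW]
  ring

end GronwallAux

open GronwallAux

/-- Two-variable Grönwall-type lemma (Lemma 4.1 of the paper). -/
theorem gronwall_two_variables
    (u1 u2 v1 v2 A B : ℝ) (hu : u1 < u2) (hv : v1 < v2)
    (hA : 0 < A) (hB : 0 < B)
    (f g : ℝ → ℝ → ℝ) (h k : ℝ → ℝ)
    (hf : ContinuousOn (fun p : ℝ × ℝ => f p.1 p.2) (Icc u1 u2 ×ˢ Icc v1 v2))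
    (hg : ContinuousOn (fun p : ℝ × ℝ => g p.1 p.2) (Icc u1 u2 ×ˢ Icc v1 v2))
    (hh : ContinuousOn h (Icc u1 u2)) (hk : ContinuousOn k (Icc v1 v2))
    (hf0 : ∀ u ∈ Icc u1 u2, ∀ v ∈ Icc v1 v2, 0 ≤ f u v)
    (hg0 : ∀ u ∈ Icc u1 u2, ∀ v ∈ Icc v1 v2, 0 ≤ g u v)
    (hh0 : ∀ u ∈ Icc u1 u2, 0 ≤ h u)
    (hk0 : ∀ v ∈ Icc v1 v2, 0 ≤ k v)
    (hyp : ∀ u ∈ Icc u1 u2, ∀ v ∈ Icc v1 v2,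
      f u v + g u v ≤ A + B * ((∫ u' in u1..u, h u' * f u' v) + ∫ v' in v1..v, k v' * g u v')) :
    ∀ η > 0, ∀ β, 2 * (1 + η) / η ≤ β →
      ∀ u ∈ Icc u1 u2, ∀ v ∈ Icc v1 v2,
        f u v + g u v ≤ (1 + η) * A *
          Real.exp (β * B * ((∫ u' in u1..u, h u') + ∫ v' in v1..v, k v')) := by
  -- continuous extensions of h and k to all of ℝ
  set h' : ℝ → ℝ := fun s => h (min u2 (max u1 s)) with hh'def
  set k' : ℝ → ℝ := fun t => k (min v2 (max v1 t)) with hk'def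
  have hproj_u : ∀ s : ℝ, min u2 (max u1 s) ∈ Icc u1 u2 := by
    intro s
    constructor
    · exact le_min hu.le (le_max_left _ _)
    · exact min_le_left _ _
  have hproj_v : ∀ t : ℝ, min v2 (max v1 t) ∈ Icc v1 v2 := by
    intro t
    constructor
    · exact le_min hv.le (le_max_left _ _)
    · exact min_le_left _ _
  have hh'c : Continuous h' :=
    hh.comp_continuous (continuous_const.min (continuous_const.max continuous_id)) hproj_u
  have hk'c : Continuous k' :=
    hk.comp_continuous (continuous_const.min (continuous_const.max continuous_id)) hproj_v
  have hh'eq : EqOn h' h (Icc u1 u2) := by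
    intro s hs
    simp only [hh'def]
    rw [max_eq_right hs.1, min_eq_right hs.2]
  have hk'eq : EqOn k' k (Icc v1 v2) := by
    intro t ht
    simp only [hk'def]
    rw [max_eq_right ht.1, min_eq_right ht.2]
  have hh'0 : ∀ s, 0 ≤ h' s := fun s => hh0 _ (hproj_u s)
  have hk'0 : ∀ t, 0 ≤ k' t := fun t => hk0 _ (hproj_v t)
  -- primitives
  set H : ℝ → ℝ := fun x => ∫ t in u1..x, h' t with hHdef
  set K : ℝ → ℝ := fun y => ∫ t in v1..y, k' t with hKdef
  have hHc : Continuous H := continuous_primitive' hh'c u1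
  have hKc : Continuous K := continuous_primitive' hk'c v1
  have hH0 : ∀ x ∈ Icc u1 u2, 0 ≤ H x := fun x hx =>
    intervalIntegral.integral_nonneg hx.1 (fun s _ => hh'0 s)
  have hK0 : ∀ y ∈ Icc v1 v2, 0 ≤ K y := fun y hy =>
    intervalIntegral.integral_nonneg hy.1 (fun t _ => hk'0 t)
  have hHeq : ∀ u ∈ Icc u1 u2, (∫ u' in u1..u, h u') = H u := by
    intro u hu'
    apply intervalIntegral.integral_congr
    intro s hs
    rw [uIcc_of_le hu'.1] at hs
    exact (hh'eq (Icc_subset_Icc le_rfl hu'.2 hs)).symm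
  have hKeq : ∀ v ∈ Icc v1 v2, (∫ v' in v1..v, k v') = K v := by
    intro v hv'
    apply intervalIntegral.integral_congr
    intro t ht
    rw [uIcc_of_le hv'.1] at ht
    exact (hk'eq (Icc_subset_Icc le_rfl hv'.2 ht)).symm
  -- maximum of f + g on the rectangle
  obtain ⟨p, hp, hpmax⟩ := (isCompact_Icc.prod isCompact_Icc).exists_isMaxOn
    ⟨(u1, v1), ⟨⟨le_refl _, hu.le⟩, ⟨le_refl _, hv.le⟩⟩⟩ (hf.add hg)
  set C : ℝ := f p.1 p.2 + g p.1 p.2 with hCdef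
  have hCb : ∀ u ∈ Icc u1 u2, ∀ v ∈ Icc v1 v2, f u v + g u v ≤ C := by
    intro u hu' v hv'
    exact hpmax (show (u, v) ∈ Icc u1 u2 ×ˢ Icc v1 v2 from ⟨hu', hv'⟩)
  have hC0 : 0 ≤ C := add_nonneg (hf0 _ hp.1 _ hp.2) (hg0 _ hp.1 _ hp.2)
  -- slice continuity
  have hfslice : ∀ v ∈ Icc v1 v2, ContinuousOn (fun s => f s v) (Icc u1 u2) := by
    intro v hv'
    exact hf.comp ((continuous_id.prodMk continuous_const).continuousOn)
      (fun x hx => ⟨hx, hv'⟩)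
  have hgslice : ∀ u ∈ Icc u1 u2, ContinuousOn (fun t => g u t) (Icc v1 v2) := by
    intro u hu'
    exact hg.comp ((continuous_const.prodMk continuous_id).continuousOn)
      (fun x hx => ⟨hu', hx⟩)
  -- key induction
  have key : ∀ n : ℕ, ∀ u ∈ Icc u1 u2, ∀ v ∈ Icc v1 v2,
      f u v + g u v ≤ A * Real.exp (2 * B * (H u + K v))
        + C * (2 * B * (H u + K v)) ^ n / n.factorial := by
    intro n
    induction n with
    | zero =>
      intro u hu' v hv'
      have h1 := hCb u hu' v hv'
      have h2 : 0 ≤ A * Real.exp (2 * B * (H u + K v)) := by positivity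
      simp only [pow_zero, Nat.factorial_zero, Nat.cast_one, mul_one, div_one]
      linarith
    | succ n ih =>
      intro u hu' v hv'
      have hHu : 0 ≤ H u := hH0 u hu'
      have hKv : 0 ≤ K v := hK0 v hv'
      have hsub_u : Icc u1 u ⊆ Icc u1 u2 := Icc_subset_Icc le_rfl hu'.2
      have hsub_v : Icc v1 v ⊆ Icc v1 v2 := Icc_subset_Icc le_rfl hv'.2
      have hfac : (0:ℝ) < n.factorial := by positivity
      have cont_e : Continuous (fun s => h' s * Real.exp (2*B*(H s + K v))) := by fun_prop
      have cont_p : Continuous (fun s => h' s * (H s + K v)^n) := by fun_prop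
      have cont_e2 : Continuous (fun t => k' t * Real.exp (2*B*(K t + H u))) := by fun_prop
      have cont_p2 : Continuous (fun t => k' t * (K t + H u)^n) := by fun_prop
      have I1 : (∫ s in u1..u, h' s * Real.exp (2*B*(H s + K v)))
          = (Real.exp (2*B*(H u + K v)) - Real.exp (2*B*(K v))) / (2*B) := by
        simp only [hHdef]
        exact integral_mul_exp hh'c u1 u (K v) (2*B) (by linarith)
      have I2 : (∫ s in u1..u, h' s * (H s + K v)^n)
          = ((H u + K v)^(n+1) - (K v)^(n+1)) / (n+1) := by
        simp only [hHdef]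
        exact integral_mul_pow hh'c u1 u (K v) n
      have I3 : (∫ t in v1..v, k' t * Real.exp (2*B*(K t + H u)))
          = (Real.exp (2*B*(K v + H u)) - Real.exp (2*B*(H u))) / (2*B) := by
        simp only [hKdef]
        exact integral_mul_exp hk'c v1 v (H u) (2*B) (by linarith)
      have I4 : (∫ t in v1..v, k' t * (K t + H u)^n)
          = ((K v + H u)^(n+1) - (H u)^(n+1)) / (n+1) := by
        simp only [hKdef]
        exact integral_mul_pow hk'c v1 v (H u) n
      -- bound on the first integral
      have hT1 : (∫ u' in u1..u, h u' * f u' v) ≤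
          A * ((Real.exp (2*B*(H u + K v)) - Real.exp (2*B*(K v))) / (2*B))
          + C * (2*B)^n / n.factorial * (((H u + K v)^(n+1) - (K v)^(n+1)) / (n+1)) := by
        have ptwise : ∀ s ∈ Icc u1 u, h s * f s v ≤
            A * (h' s * Real.exp (2*B*(H s + K v)))
            + C * (2*B)^n / n.factorial * (h' s * (H s + K v)^n) := by
          intro s hs
          have hs2 : s ∈ Icc u1 u2 := hsub_u hs
          have heq : h s = h' s := (hh'eq hs2).symm
          have hb := ih s hs2 v hv'
          have hfb : f s v ≤ A * Real.exp (2*B*(H s + K v))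
              + C * (2*B*(H s + K v))^n / n.factorial := by
            have := hg0 s hs2 v hv'; linarith
          calc h s * f s v = h' s * f s v := by rw [heq]
            _ ≤ h' s * (A * Real.exp (2*B*(H s + K v))
                  + C * (2*B*(H s + K v))^n / n.factorial) :=
                mul_le_mul_of_nonneg_left hfb (hh'0 s)
            _ = A * (h' s * Real.exp (2*B*(H s + K v)))
                  + C * (2*B)^n / n.factorial * (h' s * (H s + K v)^n) := by
                rw [mul_pow]; ring
        have int1 : IntervalIntegrable (fun s => h s * f s v) volume u1 u := by
          apply ContinuousOn.intervalIntegrable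
          rw [uIcc_of_le hu'.1]
          exact (hh.mono hsub_u).mul ((hfslice v hv').mono hsub_u)
        have int2 : IntervalIntegrable (fun s => A * (h' s * Real.exp (2*B*(H s + K v)))
            + C * (2*B)^n / n.factorial * (h' s * (H s + K v)^n)) volume u1 u :=
          ((continuous_const.mul cont_e).add (continuous_const.mul cont_p)).intervalIntegrable u1 u
        have mono := intervalIntegral.integral_mono_on hu'.1 int1 int2 ptwise
        have splitI : (∫ s in u1..u, (A * (h' s * Real.exp (2*B*(H s + K v)))
            + C * (2*B)^n / n.factorial * (h' s * (H s + K v)^n)))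
            = A * ((Real.exp (2*B*(H u + K v)) - Real.exp (2*B*(K v))) / (2*B))
              + C * (2*B)^n / n.factorial * (((H u + K v)^(n+1) - (K v)^(n+1)) / (n+1)) := by
          rw [intervalIntegral.integral_add (f := fun s => A * (h' s * Real.exp (2*B*(H s + K v))))
              (g := fun s => C * (2*B)^n / n.factorial * (h' s * (H s + K v)^n))
              ((continuous_const.mul cont_e).intervalIntegrable _ _)
              ((continuous_const.mul cont_p).intervalIntegrable _ _),
            intervalIntegral.integral_const_mul, intervalIntegral.integral_const_mul, I1, I2]
        exact mono.trans (le_of_eq splitI)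
      -- bound on the second integral
      have hT2 : (∫ v' in v1..v, k v' * g u v') ≤
          A * ((Real.exp (2*B*(H u + K v)) - Real.exp (2*B*(H u))) / (2*B))
          + C * (2*B)^n / n.factorial * (((H u + K v)^(n+1) - (H u)^(n+1)) / (n+1)) := by
        have ptwise : ∀ t ∈ Icc v1 v, k t * g u t ≤
            A * (k' t * Real.exp (2*B*(K t + H u)))
            + C * (2*B)^n / n.factorial * (k' t * (K t + H u)^n) := by
          intro t ht
          have ht2 : t ∈ Icc v1 v2 := hsub_v ht
          have heq : k t = k' t := (hk'eq ht2).symm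
          have hb := ih u hu' t ht2
          rw [add_comm (H u) (K t)] at hb
          have hgb : g u t ≤ A * Real.exp (2*B*(K t + H u))
              + C * (2*B*(K t + H u))^n / n.factorial := by
            have := hf0 u hu' t ht2; linarith
          calc k t * g u t = k' t * g u t := by rw [heq]
            _ ≤ k' t * (A * Real.exp (2*B*(K t + H u))
                  + C * (2*B*(K t + H u))^n / n.factorial) :=
                mul_le_mul_of_nonneg_left hgb (hk'0 t)
            _ = A * (k' t * Real.exp (2*B*(K t + H u)))
                  + C * (2*B)^n / n.factorial * (k' t * (K t + H u)^n) := by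
                rw [mul_pow]; ring
        have int1 : IntervalIntegrable (fun t => k t * g u t) volume v1 v := by
          apply ContinuousOn.intervalIntegrable
          rw [uIcc_of_le hv'.1]
          exact (hk.mono hsub_v).mul ((hgslice u hu').mono hsub_v)
        have int2 : IntervalIntegrable (fun t => A * (k' t * Real.exp (2*B*(K t + H u)))
            + C * (2*B)^n / n.factorial * (k' t * (K t + H u)^n)) volume v1 v :=
          ((continuous_const.mul cont_e2).add (continuous_const.mul cont_p2)).intervalIntegrable v1 v
        have mono := intervalIntegral.integral_mono_on hv'.1 int1 int2 ptwise
        have splitI : (∫ t in v1..v, (A * (k' t * Real.exp (2*B*(K t + H u)))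
            + C * (2*B)^n / n.factorial * (k' t * (K t + H u)^n)))
            = A * ((Real.exp (2*B*(H u + K v)) - Real.exp (2*B*(H u))) / (2*B))
              + C * (2*B)^n / n.factorial * (((H u + K v)^(n+1) - (H u)^(n+1)) / (n+1)) := by
          rw [intervalIntegral.integral_add (f := fun t => A * (k' t * Real.exp (2*B*(K t + H u))))
              (g := fun t => C * (2*B)^n / n.factorial * (k' t * (K t + H u)^n))
              ((continuous_const.mul cont_e2).intervalIntegrable _ _)
              ((continuous_const.mul cont_p2).intervalIntegrable _ _),
            intervalIntegral.integral_const_mul, intervalIntegral.integral_const_mul, I3, I4,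
            add_comm (K v) (H u)]
        exact mono.trans (le_of_eq splitI)
      -- combine
      have hyp' := hyp u hu' v hv'
      have he1 : 1 ≤ Real.exp (2*B*(K v)) := Real.one_le_exp (by positivity)
      have he2 : 1 ≤ Real.exp (2*B*(H u)) := Real.one_le_exp (by positivity)
      have hx : 0 ≤ (K v)^(n+1) := by positivity
      have hy : 0 ≤ (H u)^(n+1) := by positivity
      have hmul : B * ((∫ u' in u1..u, h u' * f u' v) + ∫ v' in v1..v, k v' * g u v')
          ≤ B * ((A * ((Real.exp (2*B*(H u + K v)) - Real.exp (2*B*(K v))) / (2*B))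
              + C * (2*B)^n / n.factorial * (((H u + K v)^(n+1) - (K v)^(n+1)) / (n+1)))
            + (A * ((Real.exp (2*B*(H u + K v)) - Real.exp (2*B*(H u))) / (2*B))
              + C * (2*B)^n / n.factorial * (((H u + K v)^(n+1) - (H u)^(n+1)) / (n+1)))) :=
        mul_le_mul_of_nonneg_left (add_le_add hT1 hT2) hB.le
      have hfacs : ((n+1).factorial : ℝ) = (n.factorial : ℝ) * ((n:ℝ)+1) := by
        rw [Nat.factorial_succ]; push_cast; ring
      set E := Real.exp (2*B*(H u + K v)) with hEdef
      set P := (H u + K v)^(n+1) with hPdef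
      have hc0 : 0 ≤ B * C * (2*B)^n / ((n.factorial:ℝ) * ((n:ℝ)+1)) := by positivity
      have hsum : B * ((A * ((E - Real.exp (2*B*(K v))) / (2*B))
              + C * (2*B)^n / n.factorial * ((P - (K v)^(n+1)) / (n+1)))
            + (A * ((E - Real.exp (2*B*(H u))) / (2*B))
              + C * (2*B)^n / n.factorial * ((P - (H u)^(n+1)) / (n+1))))
          = A * (2*E - Real.exp (2*B*(K v)) - Real.exp (2*B*(H u))) / 2
            + (B * C * (2*B)^n / ((n.factorial:ℝ) * ((n:ℝ)+1)))
              * (2*P - (K v)^(n+1) - (H u)^(n+1)) := by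
        field_simp
        ring
      have hrhs : C * (2*B*(H u + K v))^(n+1) / ((n+1).factorial : ℝ)
          = 2 * (B * C * (2*B)^n / ((n.factorial:ℝ) * ((n:ℝ)+1))) * P := by
        rw [hfacs, hPdef, mul_pow, pow_succ]
        field_simp
      rw [hrhs]
      have hAe : A * 2 ≤ A * (Real.exp (2*B*(K v)) + Real.exp (2*B*(H u))) :=
        mul_le_mul_of_nonneg_left (by linarith) hA.le
      linarith [mul_nonneg hc0 hx, mul_nonneg hc0 hy, hmul, hsum, hyp', hAe]
  -- pass to the limit
  have core : ∀ u ∈ Icc u1 u2, ∀ v ∈ Icc v1 v2,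
      f u v + g u v ≤ A * Real.exp (2*B*(H u + K v)) := by
    intro u hu' v hv'
    have hlim : Filter.Tendsto (fun n : ℕ => A * Real.exp (2*B*(H u + K v))
        + C * (2*B*(H u + K v))^n / n.factorial) Filter.atTop
        (nhds (A * Real.exp (2*B*(H u + K v)) + C * 0)) := by
      apply Filter.Tendsto.add tendsto_const_nhds
      have h1 := FloorSemiring.tendsto_pow_div_factorial_atTop (K := ℝ) (2*B*(H u + K v))
      simpa [mul_div_assoc] using h1.const_mul C
    rw [mul_zero, add_zero] at hlim
    exact ge_of_tendsto' hlim (fun n => key n u hu' v hv')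
  -- conclude
  intro η hη β hβ u hu' v hv'
  have hHu : 0 ≤ H u := hH0 u hu'
  have hKv : 0 ≤ K v := hK0 v hv'
  have hβ2 : (2:ℝ) ≤ β := by
    refine le_trans ?_ hβ
    rw [le_div_iff₀ hη]
    linarith
  rw [hHeq u hu', hKeq v hv']
  have hexp : Real.exp (2*B*(H u + K v)) ≤ Real.exp (β*B*(H u + K v)) := by
    apply Real.exp_le_exp.mpr
    nlinarith [mul_nonneg (mul_nonneg (sub_nonneg.mpr hβ2) hB.le) (add_nonneg hHu hKv)]
  have hc := core u hu' v hv'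
  have hE : 0 < Real.exp (β*B*(H u + K v)) := Real.exp_pos _
  nlinarith [mul_le_mul_of_nonneg_left hexp hA.le, mul_pos (mul_pos hη hA) hE]
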